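/- For positive integers a, b, n, the number of (a,b,...,b)-parking functions of length n equals a·(a+bn)^{n-1}. That is, the number of sequences (c_1,...,c_n) of positive integers whose nondecreasing rearrangement c_{(1)} ≤ ... ≤ c_{(n)} satisfies c_{(i)} ≤ a + (i-1)b for all i, equals a(a+bn)^{n-1}. -/

import Mathlib

open Finset

/-- `c` rearranges nondecreasingly so that the `i`-th order statistic is at most `u i`. -/
def SortedLE {n : ℕ} (c u : Fin n → ℕ) : Prop :=
  ∃ σ : Equiv.Perm (Fin n),
    (∀ i j : Fin n, i ≤ j → c (σ i) ≤ c (σ j)) ∧ ∀ i, c (σ i) ≤ u i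


lemma sortedLE_iff_count {n : ℕ} (c u : Fin n → ℕ) :
    SortedLE c u ↔ ∀ k : Fin n, (k : ℕ) + 1 ≤ (univ.filter (fun i => c i ≤ u k)).card := by
  constructor
  · rintro ⟨σ, hmono, hle⟩ k
    have hsub : (Finset.Iic k).image σ ⊆ univ.filter (fun i => c i ≤ u k) := by
      intro i hi
      simp only [Finset.mem_image, Finset.mem_Iic] at hi
      obtain ⟨j, hj, rfl⟩ := hi
      simp only [Finset.mem_filter, Finset.mem_univ, true_and]
      exact le_trans (hmono j k hj) (hle k)
    have h1 := Finset.card_le_card hsub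
    rwa [Finset.card_image_of_injective _ σ.injective, Fin.card_Iic] at h1
  · intro h
    refine ⟨Tuple.sort c, fun i j hij => Tuple.monotone_sort c hij, ?_⟩
    intro k
    by_contra hcon
    push_neg at hcon
    have hsub : univ.filter (fun i => c i ≤ u k) ⊆ (Finset.Iio k).image (Tuple.sort c) := by
      intro i hi
      simp only [Finset.mem_filter, Finset.mem_univ, true_and] at hi
      simp only [Finset.mem_image, Finset.mem_Iio]
      refine ⟨(Tuple.sort c).symm i, ?_, by simp⟩
      by_contra hge
      push_neg at hge
      have : c (Tuple.sort c k) ≤ c (Tuple.sort c ((Tuple.sort c).symm i)) :=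
        Tuple.monotone_sort c hge
      simp only [Equiv.apply_symm_apply] at this
      omega
    have h1 := Finset.card_le_card hsub
    rw [Finset.card_image_of_injective _ (Tuple.sort c).injective, Fin.card_Iio] at h1
    have h2 := h k
    omega


section Cycle

variable (g : ℕ → ℤ)

/-- prefix sums -/
def SS (j : ℕ) : ℤ := ∑ r ∈ Finset.range j, g r

variable {g} {m a : ℕ}

lemma SS_succ (j : ℕ) : SS g (j+1) = SS g j + g j := Finset.sum_range_succ g j

lemma window_sum (hper : ∀ r, g (r + m) = g r)
    (hsum : ∑ r ∈ Finset.range m, g r = a) :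
    ∀ j, ∑ r ∈ Finset.range m, g (j + r) = a := by
  intro j
  induction j with
  | zero => simp only [Nat.zero_add]; exact hsum
  | succ j ih =>
    have h1 : ∑ r ∈ Finset.range (m+1), g (j + r)
        = ∑ r ∈ Finset.range m, g (j + r) + g (j + m) := Finset.sum_range_succ _ m
    have h2 : ∑ r ∈ Finset.range (m+1), g (j + r)
        = ∑ r ∈ Finset.range m, g (j + (r+1)) + g (j + 0) := Finset.sum_range_succ' _ m
    have h3 : ∑ r ∈ Finset.range m, g (j + (r+1)) = ∑ r ∈ Finset.range m, g ((j+1) + r) := by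
      apply Finset.sum_congr rfl
      intro r _
      congr 1
      omega
    rw [h3] at h2
    have h4 := hper j
    have h6 : g (j+0) = g j := by norm_num
    omega

lemma SS_shift (hper : ∀ r, g (r + m) = g r)
    (hsum : ∑ r ∈ Finset.range m, g r = a) (j : ℕ) :
    SS g (j + m) = SS g j + a := by
  have : SS g (j + m) = SS g j + ∑ r ∈ Finset.range m, g (j + r) := by
    rw [SS, SS, Finset.sum_range_add]
  rw [this, window_sum hper hsum]

lemma SS_shift_mul (hper : ∀ r, g (r + m) = g r)
    (hsum : ∑ r ∈ Finset.range m, g r = a) (k j : ℕ) :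
    SS g (j + k * m) = SS g j + k * a := by
  induction k with
  | zero => simp
  | succ k ih =>
    have h0 : j + (k+1) * m = (j + k*m) + m := by ring
    rw [h0, SS_shift hper hsum, ih]; push_cast; ring

theorem cycle_count (hm : 0 < m) (ha : 0 < a)
    (hg1 : ∀ r, g r ≤ 1) (hper : ∀ r, g (r + m) = g r)
    (hsum : ∑ r ∈ Finset.range m, g r = a)
    (F : Finset ℕ)
    (hF : ∀ t, t ∈ F ↔ (t < m ∧ ∀ s ∈ Finset.Icc 1 m, SS g t < SS g (t + s))) :
    F.card = a := by
  classical
  obtain ⟨j0, hj0m, hj0⟩ : ∃ j0 < m, ∀ j < m, SS g j0 ≤ SS g j := by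
    obtain ⟨j0, hj0m, hj0⟩ := Finset.exists_min_image (Finset.range m) (SS g)
      ⟨0, Finset.mem_range.2 hm⟩
    exact ⟨j0, Finset.mem_range.1 hj0m, fun j hj => hj0 j (Finset.mem_range.2 hj)⟩
  set μ := SS g j0 with hμdef
  -- global lower bound with growth
  have hglob : ∀ j, μ + ((j / m : ℕ) : ℤ) ≤ SS g j := by
    intro j
    have h1 := SS_shift_mul hper hsum (j / m) (j % m)
    rw [Nat.mod_add_div' j m] at h1
    have h2 : μ ≤ SS g (j % m) := hj0 _ (Nat.mod_lt _ hm)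
    have h3 : ((j / m : ℕ) : ℤ) ≤ ((j / m : ℕ) : ℤ) * a :=
      le_mul_of_one_le_right (Int.natCast_nonneg _) (by exact_mod_cast ha)
    omega
  have hglobal : ∀ j, μ ≤ SS g j := by
    intro j
    have h1 := hglob j
    have h2 : (0:ℤ) ≤ ((j / m : ℕ) : ℤ) := Int.natCast_nonneg _
    omega
  set B : ℤ → ℕ := fun v => m * ((v - μ).toNat + 1) with hB
  have hBsplit : ∀ v : ℤ, B v = m * (v - μ).toNat + m := by
    intro v; simp only [hB]; ring
  have hBgt : ∀ (v : ℤ) (j : ℕ), B v ≤ j → v < SS g j := by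
    intro v j hj
    have h1 : (v - μ).toNat + 1 ≤ j / m := by
      rw [Nat.le_div_iff_mul_le hm]
      calc ((v-μ).toNat + 1) * m = m * ((v-μ).toNat+1) := by ring
      _ ≤ j := hj
    have h2 := hglob j
    have h3 : v - μ ≤ ((v - μ).toNat : ℤ) := Int.self_le_toNat _
    omega
  set T : ℤ → ℕ := fun v => Nat.findGreatest (fun j => SS g j ≤ v) (B v) with hT
  have hmB : ∀ v, m ≤ B v := by
    intro v; rw [hBsplit]; omega
  have hTle : ∀ v, μ ≤ v → SS g (T v) ≤ v := by
    intro v hv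
    exact Nat.findGreatest_spec (P := fun j => SS g j ≤ v) (m := j0) (n := B v)
      (Nat.le_trans hj0m.le (hmB v)) hv
  have hTgt : ∀ v, μ ≤ v → ∀ j, T v < j → v < SS g j := by
    intro v hv j hj
    by_cases hjB : j ≤ B v
    · have := Nat.findGreatest_is_greatest (P := fun j => SS g j ≤ v) hj hjB
      omega
    · exact hBgt v j (by omega)
  have hTval : ∀ v, μ ≤ v → SS g (T v) = v := by
    intro v hv
    have h1 := hTle v hv
    have h2 := hTgt v hv (T v + 1) (by omega)
    have h3 := SS_succ (g := g) (T v)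
    have h4 := hg1 (T v)
    omega
  have huniq : ∀ (v : ℤ) (t : ℕ), μ ≤ v → SS g t ≤ v → (∀ j, t < j → v < SS g j) → t = T v := by
    intro v t hv hle hgt
    have htB : t ≤ B v := by
      have h1 := hglob t
      have h3 : t / m ≤ (v - μ).toNat := by omega
      have h4 : t < t / m * m + m := Nat.lt_div_mul_add hm
      have h5 : m * (t/m) ≤ m * (v-μ).toNat := Nat.mul_le_mul_left m h3
      have h6 : t/m * m = m * (t/m) := by ring
      have h7 := hBsplit v
      omega
    have h5 : t ≤ T v := Nat.le_findGreatest htB hle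
    rcases Nat.lt_or_ge t (T v) with h | h
    · have := hgt (T v) h
      have := hTle v hv
      omega
    · omega
  have hTshift : ∀ v, μ ≤ v → T (v + a) = T v + m := by
    intro v hv
    symm
    apply huniq (v + a) (T v + m) (by omega)
    · rw [SS_shift hper hsum, hTval v hv]
    · intro j hj
      have h1 := SS_shift hper hsum (j - m)
      rw [show j - m + m = j by omega] at h1
      have h2 := hTgt v hv (j - m) (by omega)
      omega
  have hGoodInf : ∀ t, (∀ s ∈ Finset.Icc 1 m, SS g t < SS g (t + s)) →
      ∀ j, t < j → SS g t < SS g j := by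
    intro t hgood j
    induction j using Nat.strong_induction_on with
    | _ j ih =>
      intro hj
      by_cases hjm : j ≤ t + m
      · have h := hgood (j - t) (Finset.mem_Icc.2 (by omega))
        rw [show t + (j - t) = j by omega] at h
        exact h
      · have h1 := SS_shift hper hsum (j - m)
        rw [show j - m + m = j by omega] at h1
        have h2 := ih (j - m) (by omega) (by omega)
        omega
  have hset : F = (Finset.Ico μ (μ + a)).image T := by
    ext t
    rw [hF]
    simp only [Finset.mem_image, Finset.mem_Ico]
    constructor
    · rintro ⟨htm, hgood⟩
      have hinf := hGoodInf t hgood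
      have ht : t = T (SS g t) := huniq (SS g t) t (hglobal t) le_rfl hinf
      refine ⟨SS g t, ⟨hglobal t, ?_⟩, ht.symm⟩
      by_contra hcon
      push_neg at hcon
      have hv : μ ≤ SS g t - a := by omega
      have h8 := hTshift (SS g t - a) hv
      rw [show SS g t - a + a = SS g t by ring] at h8
      omega
    · rintro ⟨v, ⟨hv1, hv2⟩, rfl⟩
      constructor
      · by_contra hcon
        push_neg at hcon
        have h1 := SS_shift hper hsum (T v - m)
        rw [show T v - m + m = T v by omega] at h1
        have h2 := hglobal (T v - m)
        have h3 := hTval v hv1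
        omega
      · intro s hs
        rw [Finset.mem_Icc] at hs
        rw [hTval v hv1]
        exact hTgt v hv1 (T v + s) (by omega)
  rw [hset, Finset.card_image_of_injOn]
  · simp [Int.card_Ico]
  · intro v hv w hw hvw
    simp only [Finset.coe_Ico, Set.mem_Ico] at hv hw
    have h1 := hTval v hv.1
    have h2 := hTval w hw.1
    rw [← h1, ← h2, hvw]

end Cycle


lemma cast_val_eq {m : ℕ} [NeZero m] (y : ZMod m) : ((y.val : ℕ) : ZMod m) = y :=
  ZMod.natCast_rightInverse y

lemma zmod_filter_range_card {m : ℕ} [NeZero m] (z : ZMod m) (s : ℕ) (hs : s ≤ m) :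
    ((Finset.range s).filter (fun r : ℕ => (r : ZMod m) = z)).card
      = if z.val < s then 1 else 0 := by
  have key : (Finset.range s).filter (fun r : ℕ => (r : ZMod m) = z)
      = if z.val < s then ({z.val} : Finset ℕ) else ∅ := by
    ext r
    split_ifs with h
    · simp only [Finset.mem_filter, Finset.mem_range, Finset.mem_singleton]
      constructor
      · rintro ⟨hr, he⟩
        rw [← he, ZMod.val_cast_of_lt (lt_of_lt_of_le hr hs)]
      · rintro rfl
        exact ⟨h, cast_val_eq z⟩
    · simp only [Finset.mem_filter, Finset.mem_range, Finset.notMem_empty, iff_false,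
        not_and]
      intro hr he
      apply h
      have : ((r : ZMod m)).val = r := ZMod.val_cast_of_lt (lt_of_lt_of_le hr hs)
      rw [he] at this
      omega
  rw [key]
  split_ifs <;> simp

lemma neg_succ_val {m : ℕ} [NeZero m] (hm : 0 < m) (y : ZMod m) :
    (-(y + 1)).val = m - 1 - y.val := by
  have hv := ZMod.val_lt y
  by_cases h : y.val = m - 1
  · have hy : y + 1 = 0 := by
      have h0 : y = ((m - 1 : ℕ) : ZMod m) := by rw [← h, cast_val_eq]
      rw [h0]
      have h1 : ((m - 1 : ℕ) : ZMod m) + 1 = ((m - 1 + 1 : ℕ) : ZMod m) := by push_cast; ring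
      rw [h1, show m - 1 + 1 = m by omega, ZMod.natCast_self]
    rw [hy, neg_zero, ZMod.val_zero, h]
    omega
  · have h1 : (y + 1).val = y.val + 1 := by
      have h0 : ((y.val + 1 : ℕ) : ZMod m) = y + 1 := by
        rw [Nat.cast_add, Nat.cast_one, cast_val_eq]
      rw [← h0, ZMod.val_cast_of_lt (by omega)]
    have h2 : y + 1 ≠ 0 := by
      intro hc
      rw [hc, ZMod.val_zero] at h1
      omega
    rw [ZMod.neg_val, if_neg h2, h1]
    omega


def cntD {n m : ℕ} (d : Fin n → ZMod m) (r : ℕ) : ℕ :=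
  ((univ : Finset (Fin n)).filter (fun i => d i = -1 - (r : ZMod m))).card

def gD {n m : ℕ} (b : ℕ) (d : Fin n → ZMod m) (r : ℕ) : ℤ := 1 - (b : ℤ) * cntD d r

lemma window_cnt {n m : ℕ} [NeZero m] (hm0 : 0 < m) (d : Fin n → ZMod m)
    (t s : ℕ) (hs1 : 1 ≤ s) (hsm : s ≤ m) :
    ∑ q ∈ Finset.range s, cntD d (t + q)
      = ((univ : Finset (Fin n)).filter
          (fun i => m - s ≤ (d i + (t : ZMod m)).val)).card := by
  classical
  rw [Finset.card_filter]
  simp only [cntD, Finset.card_filter]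
  rw [Finset.sum_comm]
  apply Finset.sum_congr rfl
  intro i _
  set y : ZMod m := d i + (t : ZMod m) with hy
  have hcond : ∀ q : ℕ, (d i = -1 - ((t + q : ℕ) : ZMod m)) ↔ ((q : ZMod m) = -(y + 1)) := by
    intro q
    rw [hy]
    push_cast
    constructor <;> intro h <;> linear_combination h
  calc ∑ q ∈ Finset.range s, (if d i = -1 - ((t + q : ℕ) : ZMod m) then 1 else 0)
      = ∑ q ∈ Finset.range s, (if (q : ZMod m) = -(y + 1) then 1 else 0) := by
        apply Finset.sum_congr rfl
        intro q _
        exact if_congr (hcond q) rfl rfl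
    _ = ((Finset.range s).filter (fun r : ℕ => (r : ZMod m) = -(y + 1))).card := by
        rw [Finset.card_filter]
    _ = if (-(y + 1)).val < s then 1 else 0 := zmod_filter_range_card _ s hsm
    _ = if m - s ≤ y.val then 1 else 0 := by
        have h1 := neg_succ_val hm0 y
        have h2 := ZMod.val_lt y
        have h3 : ((-(y + 1)).val < s) ↔ (m - s ≤ y.val) := by omega
        exact if_congr h3 rfl rfl

lemma SS_window {n m : ℕ} (b : ℕ) (d : Fin n → ZMod m) (t s : ℕ) :
    SS (gD b d) (t + s) = SS (gD b d) t + s - b * (∑ q ∈ Finset.range s, (cntD d (t + q) : ℤ)) := by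
  have h1 : SS (gD b d) (t + s) = SS (gD b d) t + ∑ r ∈ Finset.range s, gD b d (t + r) := by
    rw [SS, SS, Finset.sum_range_add]
  rw [h1]
  simp only [gD]
  rw [Finset.sum_sub_distrib, Finset.sum_const, ← Finset.mul_sum]
  simp only [Finset.card_range]
  push_cast
  ring

lemma good_iff_park {a b n m : ℕ} [NeZero m] (ha : 0 < a) (hb : 0 < b) (hn : 0 < n)
    (hm : m = a + b * n) (d : Fin n → ZMod m) (t : ℕ) :
    (∀ s ∈ Finset.Icc 1 m, SS (gD b d) t < SS (gD b d) (t + s)) ↔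
    (∀ k < n, k + 1 ≤ ((univ : Finset (Fin n)).filter
        (fun i => (d i + (t : ZMod m)).val < a + k * b)).card) := by
  classical
  have hm0 : 0 < m := by omega
  set G : ℕ → ℕ := fun w => ((univ : Finset (Fin n)).filter
      (fun i => w ≤ (d i + (t : ZMod m)).val)).card with hG
  set L : ℕ → ℕ := fun w => ((univ : Finset (Fin n)).filter
      (fun i => (d i + (t : ZMod m)).val < w)).card with hL
  have hGL : ∀ w, G w + L w = n := by
    intro w
    have h1 := Finset.card_filter_add_card_filter_not
      (s := (univ : Finset (Fin n))) (p := fun i => w ≤ (d i + (t : ZMod m)).val)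
    simp only [not_le] at h1
    simpa [hG, hL, Finset.card_univ] using h1
  have hGmono : ∀ w w', w ≤ w' → G w' ≤ G w := by
    intro w w' hww
    apply Finset.card_le_card
    apply Finset.monotone_filter_right
    intro i _ hi
    exact le_trans hww hi
  have hGn : ∀ w, G w ≤ n := by
    intro w
    calc G w ≤ (univ : Finset (Fin n)).card := Finset.card_filter_le _ _
      _ = n := by simp
  -- bridge
  have hbridge : ∀ s, 1 ≤ s → s ≤ m →
      ((SS (gD b d) t < SS (gD b d) (t + s)) ↔ b * G (m - s) < s) := by
    intro s hs1 hsm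
    rw [SS_window b d t s]
    have h1 := window_cnt hm0 d t s hs1 hsm
    have h2 : (∑ q ∈ Finset.range s, (cntD d (t + q) : ℤ)) = (G (m - s) : ℤ) := by
      rw [← Nat.cast_sum, h1, hG]
    rw [h2]
    constructor <;> intro h
    · have h3 : (b : ℤ) * (G (m - s) : ℤ) < (s : ℤ) := by omega
      exact_mod_cast h3
    · have h3 : (b : ℤ) * (G (m - s) : ℤ) < (s : ℤ) := by exact_mod_cast h
      omega
  constructor
  · intro hgood k hk
    have hc1 : k * b ≤ (n - 1) * b := Nat.mul_le_mul_right b (by omega)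
    have hc2 : (n - 1) * b + b = n * b := by
      calc (n - 1) * b + b = ((n - 1) + 1) * b := by ring
        _ = n * b := by congr 1; omega
    have hc3 : n * b = b * n := by ring
    have hwle : a + k * b ≤ m - b := by omega
    set w := a + k * b with hw
    have hsm : 1 ≤ m - w := by omega
    have hbw := (hbridge (m - w) hsm (by omega)).1 (hgood (m - w) (Finset.mem_Icc.2 ⟨hsm, by omega⟩))
    rw [show m - (m - w) = w by omega] at hbw
    -- b * G w < m - w = b * (n - k)
    have he : b * n = b * (n - k) + b * k := by
      rw [← Nat.mul_add]; congr 1; omega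
    have hcm : b * k = k * b := by ring
    have hlt : b * G w < b * (n - k) := by omega
    have hGw : G w < n - k := Nat.lt_of_mul_lt_mul_left hlt
    have hGLw := hGL w
    have hLrfl : L w = ((univ : Finset (Fin n)).filter
        (fun i => (d i + (t : ZMod m)).val < w)).card := rfl
    omega
  · intro hpark s hs
    rw [Finset.mem_Icc] at hs
    rw [hbridge s hs.1 hs.2]
    set w := m - s with hwdef
    have hws : s = m - w := by omega
    have hwm : w ≤ m - 1 := by omega
    rcases Nat.lt_or_ge w a with hcase | hcase
    · -- w < a
      have h1 : b * G w ≤ b * n := Nat.mul_le_mul_left b (hGn w)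
      omega
    · rcases Nat.lt_or_ge w (a + (n - 1) * b) with hcase2 | hcase2
      · -- a ≤ w < a + (n-1) b
        set k := (w - a) / b with hk
        have hk1 : b * k ≤ w - a := by
          have := Nat.div_mul_le_self (w - a) b
          calc b * k = (w - a) / b * b := by rw [hk]; ring
            _ ≤ w - a := this
        have hk2 : w - a < b * k + b := by
          have h0 : w - a < (w - a) / b * b + b := Nat.lt_div_mul_add hb
          calc w - a < (w - a) / b * b + b := h0
            _ = b * k + b := by rw [hk]; ring
        have hkn : k < n - 1 := by
          have h3 : b * k < b * (n - 1) := by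
            calc b * k ≤ w - a := hk1
              _ < (n - 1) * b := by omega
              _ = b * (n - 1) := by ring
          exact Nat.lt_of_mul_lt_mul_left h3
        have hcm : b * k = k * b := by ring
        have hp := hpark k (by omega)
        have hGk : G (a + k * b) + (k + 1) ≤ n := by
          have hq1 := hGL (a + k * b)
          have hq2 : L (a + k * b) = ((univ : Finset (Fin n)).filter
              (fun i => (d i + (t : ZMod m)).val < a + k * b)).card := rfl
          omega
        have hmono := hGmono (a + k * b) w (by omega)
        have hble : b * G w ≤ b * (n - k - 1) := Nat.mul_le_mul_left b (by omega)
        have he : b * n = b * (n - k - 1) + b * k + b := by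
          rw [show b * (n - k - 1) + b * k + b = b * ((n - k - 1) + k + 1) by ring]
          congr 1
          omega
        omega
      · -- w ≥ a + (n-1) b
        have hp := hpark (n - 1) (by omega)
        have hGk : G (a + (n - 1) * b) = 0 := by
          have h1 := hGL (a + (n - 1) * b)
          have h3 : L (a + (n - 1) * b) = ((univ : Finset (Fin n)).filter
              (fun i => (d i + (t : ZMod m)).val < a + (n - 1) * b)).card := rfl
          omega
        have hmono := hGmono (a + (n - 1) * b) w hcase2
        have hGw0 : G w = 0 := by omega
        have hbz : b * G w = 0 := by simp [hGw0]
        omega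

lemma count_shifts {a b n m : ℕ} (ha : 0 < a) (hb : 0 < b) (hn : 0 < n)
    (hm : m = a + b * n) [NeZero m] (d : Fin n → ZMod m) (F : Finset (ZMod m))
    (hF : ∀ t, t ∈ F ↔ ∀ k < n, k + 1 ≤ ((univ : Finset (Fin n)).filter
        (fun i => (d i + t).val < a + k * b)).card) :
    F.card = a := by
  classical
  have hm0 : 0 < m := by omega
  have hg1 : ∀ r, gD b d r ≤ 1 := by
    intro r
    have h0 : (0:ℤ) ≤ (b:ℤ) * (cntD d r) := by positivity
    simp only [gD]; omega
  have hper : ∀ r, gD b d (r + m) = gD b d r := by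
    intro r
    have hcast : ((r + m : ℕ) : ZMod m) = (r : ZMod m) := by
      push_cast [ZMod.natCast_self]; ring
    simp only [gD, cntD, hcast]
  have hcntsum : ∑ r ∈ Finset.range m, cntD d r = n := by
    have h1 := window_cnt hm0 d 0 m (by omega) le_rfl
    simp only [Nat.zero_add] at h1
    rw [h1]
    have h2 : ((univ : Finset (Fin n)).filter
        (fun i => m - m ≤ (d i + ((0:ℕ) : ZMod m)).val)) = univ := by
      apply Finset.filter_true_of_mem; intro i _; omega
    rw [h2]
    simp
  have hsum : ∑ r ∈ Finset.range m, gD b d r = (a : ℤ) := by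
    simp only [gD]
    rw [Finset.sum_sub_distrib, Finset.sum_const, ← Finset.mul_sum, Finset.card_range]
    rw [show ∑ r ∈ Finset.range m, ((cntD d r : ℕ) : ℤ)
        = ((∑ r ∈ Finset.range m, cntD d r : ℕ) : ℤ) from (Nat.cast_sum _ _).symm, hcntsum]
    have hmz : (m : ℤ) = a + b * n := by exact_mod_cast hm
    simp only [nsmul_eq_mul, mul_one]
    omega
  set FN : Finset ℕ := (Finset.range m).filter (fun t => (t : ZMod m) ∈ F) with hFN
  have hcard : F.card = FN.card := by
    apply Finset.card_bij' (i := fun t _ => t.val) (j := fun t _ => ((t : ℕ) : ZMod m))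
    · intro t ht
      simp only [hFN, Finset.mem_filter, Finset.mem_range]
      exact ⟨ZMod.val_lt t, by rwa [cast_val_eq]⟩
    · intro t ht
      simp only [hFN, Finset.mem_filter, Finset.mem_range] at ht
      exact ht.2
    · intro t ht
      exact cast_val_eq t
    · intro t ht
      simp only [hFN, Finset.mem_filter, Finset.mem_range] at ht
      exact ZMod.val_cast_of_lt ht.1
  rw [hcard]
  apply cycle_count hm0 ha hg1 hper hsum FN
  intro t
  simp only [hFN, Finset.mem_filter, Finset.mem_range]
  constructor
  · rintro ⟨htm, htF⟩
    exact ⟨htm, (good_iff_park ha hb hn hm d t).2 ((hF _).1 htF)⟩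
  · rintro ⟨htm, hgood⟩
    exact ⟨htm, (hF _).2 ((good_iff_park ha hb hn hm d t).1 hgood)⟩

theorem count_ab_dots_b_parking (a b n : ℕ) (ha : 0 < a) (hb : 0 < b) (hn : 0 < n) :
    Nat.card {c : Fin n → ℕ //
        (∀ i, 1 ≤ c i) ∧ SortedLE c (fun i => a + i.1 * b)} =
      a * (a + b * n) ^ (n - 1) := by
  classical
  set m := a + b * n with hm
  haveI : NeZero m := ⟨by omega⟩
  have hm0 : 0 < m := by omega
  have hnb : (n - 1) * b + b = n * b := by
    calc (n - 1) * b + b = ((n - 1) + 1) * b := by ring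
      _ = n * b := by congr 1; omega
  have hcbn : n * b = b * n := by ring
  have hub : ∀ c : Fin n → ℕ, SortedLE c (fun i => a + i.1 * b) →
      ∀ i, c i ≤ a + (n - 1) * b := by
    rintro c ⟨σ, hmono, hle⟩ i
    have h1 := hle (σ.symm i)
    rw [Equiv.apply_symm_apply] at h1
    have h2 : ((σ.symm i : Fin n) : ℕ) ≤ n - 1 := by
      have := (σ.symm i).2; omega
    have h3 : ((σ.symm i : Fin n) : ℕ) * b ≤ (n - 1) * b := Nat.mul_le_mul_right b h2
    simp only at h1
    omega
  have hltm : a + (n - 1) * b < m := by omega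
  set P : (Fin n → ZMod m) → Prop := fun e => ∀ k < n, k + 1 ≤
      ((univ : Finset (Fin n)).filter (fun i => (e i).val < a + k * b)).card with hP
  -- Step A : equiv
  have E : {c : Fin n → ℕ // (∀ i, 1 ≤ c i) ∧ SortedLE c (fun i => a + i.1 * b)}
      ≃ {e : Fin n → ZMod m // P e} := by
    refine ⟨fun c => ⟨fun i => ((c.1 i - 1 : ℕ) : ZMod m), ?_⟩,
           fun e => ⟨fun i => (e.1 i).val + 1, ?_, ?_⟩, ?_, ?_⟩
    · -- P holds
      obtain ⟨c, h1, h2⟩ := c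
      intro k hk
      have hval : ∀ i, (((c i - 1 : ℕ) : ZMod m)).val = c i - 1 := by
        intro i
        exact ZMod.val_cast_of_lt (by have := hub c h2 i; omega)
      have hfe : (univ.filter (fun i => (((c i - 1 : ℕ) : ZMod m)).val < a + k * b))
          = univ.filter (fun i => c i ≤ a + k * b) := by
        apply Finset.filter_congr
        intro i _
        rw [hval i]
        have := h1 i
        constructor <;> intro <;> omega
      rw [hfe]
      exact (sortedLE_iff_count c _).1 h2 ⟨k, hk⟩
    · intro i
      show 1 ≤ (e.1 i).val + 1
      omega
    · -- SortedLE
      obtain ⟨e, he⟩ := e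
      rw [sortedLE_iff_count]
      intro k
      have hfe : (univ.filter (fun i => (e i).val + 1 ≤ a + (k : ℕ) * b))
          = univ.filter (fun i => (e i).val < a + (k : ℕ) * b) := by
        apply Finset.filter_congr
        intro i _
        constructor <;> intro <;> omega
      simp only
      rw [hfe]
      exact he k k.2
    · -- left inverse
      rintro ⟨c, h1, h2⟩
      apply Subtype.ext
      funext i
      simp only
      rw [ZMod.val_cast_of_lt (by have := hub c h2 i; omega)]
      have := h1 i
      omega
    · -- right inverse
      rintro ⟨e, he⟩
      apply Subtype.ext
      funext i
      simp only [Nat.add_sub_cancel]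
      exact ZMod.natCast_rightInverse (e i)
  rw [Nat.card_congr E, Nat.card_eq_fintype_card, Fintype.card_subtype]
  -- Step C : double counting
  have hshift : ∀ t : ZMod m,
      (univ.filter (fun e : Fin n → ZMod m => P (fun i => e i + t))).card
        = (univ.filter P).card := by
    intro t
    apply Finset.card_bij' (i := fun e _ => fun i => e i + t) (j := fun e _ => fun i => e i - t)
    · intro e he
      simp only [Finset.mem_filter, Finset.mem_univ, true_and] at he ⊢
      exact he
    · intro e he
      simp only [Finset.mem_filter, Finset.mem_univ, true_and] at he ⊢
      have : (fun i => e i - t + t) = e := by funext i; ring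
      rwa [this]
    · intro e _
      funext i; ring
    · intro e _
      funext i; ring
  have hper : ∀ e : Fin n → ZMod m,
      (univ.filter (fun t : ZMod m => P (fun i => e i + t))).card = a := by
    intro e
    apply count_shifts ha hb hn hm e
    intro t
    simp only [Finset.mem_filter, Finset.mem_univ, true_and, hP]
  have hdouble : (m : ℕ) * (univ.filter P).card = m ^ n * a := by
    calc m * (univ.filter P).card
        = ∑ t : ZMod m, (univ.filter (fun e : Fin n → ZMod m => P (fun i => e i + t))).card := by
          rw [Finset.sum_congr rfl (fun t _ => hshift t), Finset.sum_const, Finset.card_univ,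
            ZMod.card, smul_eq_mul]
      _ = ∑ e : Fin n → ZMod m, (univ.filter (fun t : ZMod m => P (fun i => e i + t))).card := by
          simp only [Finset.card_filter]
          rw [Finset.sum_comm]
      _ = ∑ e : Fin n → ZMod m, a := Finset.sum_congr rfl (fun e _ => hper e)
      _ = m ^ n * a := by
          rw [Finset.sum_const, Finset.card_univ, Fintype.card_fun, ZMod.card,
            Fintype.card_fin, smul_eq_mul]
  have hpow : m ^ n = m * m ^ (n - 1) := by
    rw [← pow_succ']
    congr 1
    omega
  have : m * (univ.filter P).card = m * (a * m ^ (n - 1)) := by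
    rw [hdouble, hpow]; ring
  exact Nat.eq_of_mul_eq_mul_left hm0 this
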